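/- Let X and Y be real random variables on a probability space, with Y measurable with respect to a σ-algebra V, X measurable with respect to U, and suppose |X| ≤ M and |Y| ≤ M almost surely. Then |Cov(X, Y)| ≤ 4 M² α(U, V), where α(U,V) is the strong mixing coefficient. -/

import Mathlib

open MeasureTheory

/-- Rosenblatt's strong mixing coefficient between two sub-σ-algebras. -/
noncomputable def alphaMix {Ω : Type*} {m0 : MeasurableSpace Ω} (μ : Measure Ω)
    (U V : MeasurableSpace Ω) : ℝ :=
  sSup {x : ℝ | ∃ A B : Set Ω, MeasurableSet[U] A ∧ MeasurableSet[V] B ∧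
    x = |(μ (A ∩ B)).toReal - (μ A).toReal * (μ B).toReal|}

open Set

lemma rio_core {Ω : Type*} {m m0 : MeasurableSpace Ω} (μ : Measure Ω) [IsProbabilityMeasure μ]
    (hm : m ≤ m0)
    {f g : Ω → ℝ} (hf : Integrable f μ)
    (hg : StronglyMeasurable[m] g) {C K : ℝ} (hC : 0 ≤ C)
    (hgb : ∀ᵐ ω ∂μ, |g ω| ≤ C)
    (hK : ∀ B : Set Ω, MeasurableSet[m] B →
      |(∫ ω in B, f ω ∂μ) - (μ B).toReal * ∫ ω, f ω ∂μ| ≤ K) :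
    |(∫ ω, f ω * g ω ∂μ) - (∫ ω, f ω ∂μ) * ∫ ω, g ω ∂μ| ≤ 2 * C * K := by
  set c := ∫ ω, f ω ∂μ with hc
  set h : Ω → ℝ := fun ω => (μ[f|m]) ω - c with hh
  have hmh : StronglyMeasurable[m] h :=
    stronglyMeasurable_condExp.sub stronglyMeasurable_const
  have hinth : Integrable h μ := integrable_condExp.sub (integrable_const c)
  have hgm0 : AEStronglyMeasurable g μ := (hg.mono hm).aestronglyMeasurable
  have hprod : ∀ (φ : Ω → ℝ), Integrable φ μ → AEStronglyMeasurable φ μ →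
      Integrable (fun ω => g ω * φ ω) μ := by
    intro φ hφ hφm
    refine Integrable.mono' (hφ.abs.const_mul C) (hgm0.mul hφm) ?_
    filter_upwards [hgb] with ω hω
    rw [Real.norm_eq_abs, abs_mul]
    exact mul_le_mul_of_nonneg_right hω (abs_nonneg _)
  have hgf : Integrable (fun ω => g ω * f ω) μ := hprod f hf hf.aestronglyMeasurable
  have hgcond : Integrable (fun ω => g ω * (μ[f|m]) ω) μ :=
    hprod _ integrable_condExp integrable_condExp.aestronglyMeasurable
  have hgh : Integrable (fun ω => g ω * h ω) μ := hprod h hinth hinth.aestronglyMeasurable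
  -- step A
  have hA : ∫ ω, g ω * h ω ∂μ = (∫ ω, f ω * g ω ∂μ) - c * ∫ ω, g ω ∂μ := by
    have hgi : Integrable g μ := by
      refine Integrable.mono' (integrable_const C) hgm0 ?_
      filter_upwards [hgb] with ω hω using by rwa [Real.norm_eq_abs]
    have h1 : ∫ ω, g ω * (μ[f|m]) ω ∂μ = ∫ ω, g ω * f ω ∂μ := by
      have hpull := condExp_mul_of_stronglyMeasurable_left hg (by exact hgf) hf
      calc ∫ ω, g ω * (μ[f|m]) ω ∂μ = ∫ ω, (μ[g * f|m]) ω ∂μ :=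
            (integral_congr_ae hpull).symm
        _ = ∫ ω, g ω * f ω ∂μ := integral_condExp hm
    have h2 : (fun ω => g ω * h ω)
        = fun ω => g ω * (μ[f|m]) ω - c * g ω := by
      funext ω; simp [hh]; ring
    rw [h2, integral_sub hgcond (hgi.const_mul c), h1, integral_const_mul]
    have : ∫ ω, g ω * f ω ∂μ = ∫ ω, f ω * g ω ∂μ := by
      congr 1; funext ω; ring
    rw [this]
  -- step B
  have hB : |∫ ω, g ω * h ω ∂μ| ≤ C * ∫ ω, |h ω| ∂μ := by
    calc |∫ ω, g ω * h ω ∂μ| ≤ ∫ ω, |g ω * h ω| ∂μ := by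
          have := norm_integral_le_integral_norm (μ := μ) (fun ω => g ω * h ω)
          simpa only [Real.norm_eq_abs] using this
      _ ≤ ∫ ω, C * |h ω| ∂μ := by
          refine integral_mono_ae hgh.abs (hinth.abs.const_mul C) ?_
          filter_upwards [hgb] with ω hω
          rw [abs_mul]
          exact mul_le_mul_of_nonneg_right hω (abs_nonneg _)
      _ = C * ∫ ω, |h ω| ∂μ := integral_const_mul _ _
  -- step C
  have hCstep : ∫ ω, |h ω| ∂μ ≤ 2 * K := by
    set B : Set Ω := {ω | 0 ≤ h ω} with hBdef
    have hBm : MeasurableSet[m] B := hmh.measurable measurableSet_Ici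
    have hB0 : MeasurableSet[m0] B := hm _ hBm
    have hsetint : ∀ s : Set Ω, MeasurableSet[m] s →
        ∫ ω in s, h ω ∂μ = (∫ ω in s, f ω ∂μ) - (μ s).toReal * c := by
      intro s hs
      have hs0 : MeasurableSet[m0] s := hm _ hs
      have i1 : Integrable (μ[f|m]) (μ.restrict s) := integrable_condExp.restrict
      have i2 : Integrable (fun _ => c) (μ.restrict s) := integrable_const c
      have e3 : ∫ _ω in s, c ∂μ = (μ s).toReal * c := by
        rw [integral_const (μ := μ.restrict s) c,
          measureReal_restrict_apply_univ, smul_eq_mul, measureReal_def]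
      rw [show h = fun ω => (μ[f|m]) ω - c from rfl, integral_sub i1 i2,
        setIntegral_condExp hm hf hs, e3]
    have habs : ∫ ω, |h ω| ∂μ = (∫ ω in B, h ω ∂μ) - ∫ ω in Bᶜ, h ω ∂μ := by
      have e1 : ∫ ω in B, |h ω| ∂μ = ∫ ω in B, h ω ∂μ := by
        exact setIntegral_congr_fun (μ := μ) hB0 fun ω hω => abs_of_nonneg hω
      have e2 : ∫ ω in Bᶜ, |h ω| ∂μ = ∫ ω in Bᶜ, -(h ω) ∂μ := by
        exact setIntegral_congr_fun (μ := μ) hB0.compl fun ω hω => abs_of_neg (lt_of_not_ge hω)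
      rw [← integral_add_compl (μ := μ) hB0 hinth.abs, e1, e2, integral_neg]
      ring
    rw [habs, hsetint B hBm, hsetint Bᶜ hBm.compl]
    have k1 := hK B hBm
    have k2 := hK Bᶜ hBm.compl
    rw [abs_le] at k1 k2
    linarith [k1.1, k1.2, k2.1, k2.2]
  calc |(∫ ω, f ω * g ω ∂μ) - c * ∫ ω, g ω ∂μ| = |∫ ω, g ω * h ω ∂μ| := by rw [hA]
    _ ≤ C * ∫ ω, |h ω| ∂μ := hB
    _ ≤ C * (2 * K) := mul_le_mul_of_nonneg_left hCstep hC
    _ = 2 * C * K := by ring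
lemma toReal_prob_le_one {Ω : Type*} {m0 : MeasurableSpace Ω} (μ : Measure Ω)
    [IsProbabilityMeasure μ] (s : Set Ω) : (μ s).toReal ≤ 1 := by
  have := prob_le_one (μ := μ) (s := s)
  simpa using ENNReal.toReal_mono ENNReal.one_ne_top this

lemma le_alphaMix {Ω : Type*} {U V m0 : MeasurableSpace Ω} (μ : Measure Ω)
    [IsProbabilityMeasure μ] {A B : Set Ω}
    (hA : MeasurableSet[U] A) (hB : MeasurableSet[V] B) :
    |(μ (A ∩ B)).toReal - (μ A).toReal * (μ B).toReal| ≤ alphaMix μ U V := by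
  refine le_csSup ⟨1, ?_⟩ ⟨A, B, hA, hB, rfl⟩
  rintro x ⟨A', B', -, -, rfl⟩
  have h1 := toReal_prob_le_one μ (A' ∩ B')
  have h2 := toReal_prob_le_one μ A'
  have h3 := toReal_prob_le_one μ B'
  have n1 : (0:ℝ) ≤ (μ (A' ∩ B')).toReal := ENNReal.toReal_nonneg
  have n2 : (0:ℝ) ≤ (μ A').toReal := ENNReal.toReal_nonneg
  have n3 : (0:ℝ) ≤ (μ B').toReal := ENNReal.toReal_nonneg
  rw [abs_le]
  constructor <;> nlinarith

lemma rio_aux {Ω : Type*} {U V m0 : MeasurableSpace Ω} (μ : Measure Ω) [IsProbabilityMeasure μ]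
    (hU : U ≤ m0) (hV : V ≤ m0)
    (X Y : Ω → ℝ) (hX : StronglyMeasurable[U] X) (hY : StronglyMeasurable[V] Y)
    (M : ℝ) (hXb : ∀ᵐ ω ∂μ, |X ω| ≤ M) (hYb : ∀ᵐ ω ∂μ, |Y ω| ≤ M) :
    |(∫ ω, X ω * Y ω ∂μ) - (∫ ω, X ω ∂μ) * (∫ ω, Y ω ∂μ)| ≤
      4 * M ^ 2 * alphaMix μ U V := by
  have hM : 0 ≤ M := by
    haveI : (ae μ).NeBot := ae_neBot.mpr (IsProbabilityMeasure.ne_zero μ)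
    obtain ⟨ω, hω⟩ := hXb.exists
    exact le_trans (abs_nonneg _) hω
  have hXint : Integrable X μ := by
    refine Integrable.mono' (integrable_const M) (hX.mono hU).aestronglyMeasurable ?_
    filter_upwards [hXb] with ω hω using by rwa [Real.norm_eq_abs]
  have step1 : ∀ B : Set Ω, MeasurableSet[V] B →
      |(∫ ω in B, X ω ∂μ) - (μ B).toReal * ∫ ω, X ω ∂μ| ≤ 2 * M * alphaMix μ U V := by
    intro B hB
    have hB0 : MeasurableSet[m0] B := hV _ hB
    have hind : Integrable (B.indicator (1 : Ω → ℝ)) μ :=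
      (integrable_const 1).indicator hB0
    have c1 : ∫ ω, B.indicator (1 : Ω → ℝ) ω ∂μ = (μ B).toReal :=
      integral_indicator_one hB0
    have cfun : (fun ω => B.indicator (1 : Ω → ℝ) ω * X ω) = B.indicator X := by
      funext ω; by_cases hω : ω ∈ B <;> simp [hω]
    have key := rio_core μ hU hind hX hM hXb (K := alphaMix μ U V) ?_
    · rwa [c1, show (∫ ω, B.indicator (1 : Ω → ℝ) ω * X ω ∂μ) = ∫ ω in B, X ω ∂μ by
        rw [show (fun ω => B.indicator (1 : Ω → ℝ) ω * X ω) = B.indicator X from cfun,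
          integral_indicator hB0]] at key
    · intro A hA
      have d1 : ∫ ω in A, B.indicator (1 : Ω → ℝ) ω ∂μ = (μ (A ∩ B)).toReal := by
        rw [integral_indicator_one (μ := μ.restrict A) hB0, measureReal_def, Measure.restrict_apply hB0,
          Set.inter_comm]
      rw [d1, c1]
      exact le_alphaMix μ hA hB
  have final := rio_core μ hV hXint hY hM hYb step1
  calc |(∫ ω, X ω * Y ω ∂μ) - (∫ ω, X ω ∂μ) * ∫ ω, Y ω ∂μ|
      ≤ 2 * M * (2 * M * alphaMix μ U V) := final
    _ = 4 * M ^ 2 * alphaMix μ U V := by ring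

theorem rio_covariance_inequality_bounded
    {Ω : Type*} {m0 : MeasurableSpace Ω} (μ : Measure Ω) [IsProbabilityMeasure μ]
    (U V : MeasurableSpace Ω) (hU : U ≤ m0) (hV : V ≤ m0)
    (X Y : Ω → ℝ) (hX : StronglyMeasurable[U] X) (hY : StronglyMeasurable[V] Y)
    (M : ℝ) (hXb : ∀ᵐ ω ∂μ, |X ω| ≤ M) (hYb : ∀ᵐ ω ∂μ, |Y ω| ≤ M) :
    |(∫ ω, X ω * Y ω ∂μ) - (∫ ω, X ω ∂μ) * (∫ ω, Y ω ∂μ)| ≤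
      4 * M ^ 2 * alphaMix μ U V :=
  rio_aux μ hU hV X Y hX hY M hXb hYb
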